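/- A weight m is FdB if and only if its left shift m′ defined by m′_n = m_{n+1} is almost submultiplicative. (Forward direction: if m′ is ASM with constant λ then, setting m′_0 := m_1, for r ≥ 2 and k_1,…,k_r ≥ 1, m_r m_{k_1}⋯m_{k_r} = m′_{r-1} m′_{k_1-1}⋯m′_{k_r-1} ≤ λ^{k-1} m′_{k-1} = λ^{k-1} m_k.) -/

import Mathlib

private lemma sum_map_succ (l : List ℕ) : (l.map (· + 1)).sum = l.sum + l.length := by
  induction l with
  | nil => simp
  | cons a t ih => simp only [List.map_cons, List.sum_cons, List.length_cons, ih]; omega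

private lemma length_le_sum (l : List ℕ) (h : ∀ i ∈ l, 1 ≤ i) : l.length ≤ l.sum := by
  induction l with
  | nil => simp
  | cons a t ih =>
    simp only [List.length_cons, List.sum_cons]
    have h1 := h a (by simp)
    have h2 := ih (fun i hi => h i (by simp [hi]))
    omega

private lemma prodpos (m : ℕ → ℝ) (hm : ∀ n, 1 ≤ n → 0 < m n) (l : List ℕ) :
    0 < (l.map fun n => m (n + 1)).prod := by
  apply List.prod_pos
  intro x hx
  simp only [List.mem_map] at hx
  obtain ⟨n, _, rfl⟩ := hx
  exact hm _ (by omega)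

private lemma fdb_core (m : ℕ → ℝ) (hm : ∀ n, 1 ≤ n → 0 < m n)
    (lam c : ℝ) (hlam : 1 ≤ lam) (hc1 : 1 ≤ c) (hcm : 1 ≤ m 1 * c)
    (H : ∀ ks : List ℕ, ks ≠ [] → (∀ i ∈ ks, 1 ≤ i) →
      m ks.length * (ks.map m).prod ≤ lam ^ ks.sum * m ks.sum) :
    ∀ N (ks : List ℕ), ks.length ≤ N → (∀ i ∈ ks, 1 ≤ i) → ∀ g ∈ ks,
      (ks.map fun n => m (n + 1)).prod ≤ (lam ^ 2 * c) ^ (2 * ks.sum - g) * m (ks.sum + 1) := by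
  have hnu : (1:ℝ) ≤ lam ^ 2 * c := by nlinarith
  have hnu0 : (0:ℝ) ≤ lam ^ 2 * c := by linarith
  intro N
  induction N with
  | zero =>
    intro ks hlen _ g hg
    rw [List.length_eq_zero_iff.mp (Nat.le_zero.mp hlen)] at hg
    simp at hg
  | succ N ih =>
    intro ks hlen hge g hgks
    set rest := ks.erase g with hrest_def
    have hperm : ks.Perm (g :: rest) := List.perm_cons_erase hgks
    have hsum : ks.sum = g + rest.sum := by rw [hperm.sum_eq]; simp
    have hlen2 : ks.length = rest.length + 1 := by rw [hperm.length_eq]; simp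
    have hprodeq : (ks.map fun n => m (n + 1)).prod
        = m (g + 1) * (rest.map fun n => m (n + 1)).prod := by
      rw [(hperm.map _).prod_eq]; simp
    have hge_rest : ∀ i ∈ rest, 1 ≤ i := fun i hi => hge i (List.mem_of_mem_erase hi)
    have hg1 : 1 ≤ g := hge g hgks
    have hgk : g ≤ ks.sum := by have := rest.sum; omega
    have hk1 : 1 ≤ ks.sum := by omega
    have hPrest : 0 < (rest.map fun n => m (n + 1)).prod := prodpos m hm rest
    have hmk1 : 0 < m (ks.sum + 1) := hm _ (by omega)
    by_cases hrest : rest = []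
    · -- singleton case
      have hkg : ks.sum = g := by rw [hsum, hrest]; simp
      rw [hprodeq, hrest]
      simp only [List.map_nil, List.prod_nil, mul_one]
      have h2g : 2 * ks.sum - g = g := by omega
      rw [h2g, hkg]
      nth_rewrite 1 [show m (g + 1) = 1 * m (g + 1) by ring]
      apply mul_le_mul_of_nonneg_right _ (le_of_lt (hm _ (by omega)))
      calc (1:ℝ) = 1 ^ g := by simp
        _ ≤ (lam ^ 2 * c) ^ g := pow_le_pow_left₀ (by norm_num) hnu g
    · have hrlen1 : 1 ≤ rest.length := by
        rcases List.exists_cons_of_ne_nil hrest with ⟨a, t, h⟩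
        rw [h]; simp
      by_cases hcase : ks.length ≤ g + 2
      · -- one application of FdB finishes
        set j := g + 2 - ks.length with hj_def
        set L := (rest.map (· + 1)) ++ List.replicate j 1 with hL_def
        have hLlen : L.length = g + 1 := by
          simp only [hL_def, List.length_append, List.length_map, List.length_replicate]
          omega
        have hLne : L ≠ [] := by
          intro h; rw [h] at hLlen; simp at hLlen
        have hLge : ∀ i ∈ L, 1 ≤ i := by
          intro i hi
          simp only [hL_def, List.mem_append, List.mem_map, List.mem_replicate] at hi
          rcases hi with ⟨n, _, rfl⟩ | ⟨_, rfl⟩ <;> omega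
        have hLsum : L.sum = ks.sum + 1 := by
          simp only [hL_def, List.sum_append, sum_map_succ, List.sum_replicate, smul_eq_mul]
          omega
        have hmapL : (L.map m).prod = (rest.map fun n => m (n + 1)).prod * (m 1) ^ j := by
          simp [hL_def, List.map_append, List.map_map, List.map_replicate, List.prod_append,
            List.prod_replicate, Function.comp_def]
        have hH := H L hLne hLge
        rw [hLlen, hLsum, hmapL] at hH
        rw [hprodeq]
        have hstep1 : m (g + 1) * (rest.map fun n => m (n + 1)).prod
            ≤ m (g + 1) * (rest.map fun n => m (n + 1)).prod * (m 1 * c) ^ j := by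
          apply le_mul_of_one_le_right
          · exact mul_nonneg (le_of_lt (hm _ (by omega))) (le_of_lt hPrest)
          · calc (1:ℝ) = 1 ^ j := by simp
              _ ≤ (m 1 * c) ^ j := pow_le_pow_left₀ (by norm_num) hcm j
        have hstep2 : m (g + 1) * (rest.map fun n => m (n + 1)).prod * (m 1 * c) ^ j
            ≤ lam ^ (ks.sum + 1) * m (ks.sum + 1) * c ^ j := by
          have := mul_le_mul_of_nonneg_right hH (by positivity : (0:ℝ) ≤ c ^ j)
          calc m (g + 1) * (rest.map fun n => m (n + 1)).prod * (m 1 * c) ^ j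
              = m (g + 1) * ((rest.map fun n => m (n + 1)).prod * m 1 ^ j) * c ^ j := by
                rw [mul_pow]; ring
            _ ≤ lam ^ (ks.sum + 1) * m (ks.sum + 1) * c ^ j := this
        have hexp : lam ^ (ks.sum + 1) * c ^ j ≤ (lam ^ 2 * c) ^ (2 * ks.sum - g) := by
          have he : (lam ^ 2 * c) ^ (2 * ks.sum - g)
              = lam ^ (2 * (2 * ks.sum - g)) * c ^ (2 * ks.sum - g) := by
            rw [mul_pow, ← pow_mul]
          rw [he]
          apply mul_le_mul
          · exact pow_le_pow_right₀ hlam (by omega)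
          · exact pow_le_pow_right₀ hc1 (by omega)
          · positivity
          · positivity
        calc m (g + 1) * (rest.map fun n => m (n + 1)).prod
            ≤ lam ^ (ks.sum + 1) * m (ks.sum + 1) * c ^ j := le_trans hstep1 hstep2
          _ = lam ^ (ks.sum + 1) * c ^ j * m (ks.sum + 1) := by ring
          _ ≤ (lam ^ 2 * c) ^ (2 * ks.sum - g) * m (ks.sum + 1) := by
              apply mul_le_mul_of_nonneg_right hexp (le_of_lt hmk1)
      · -- absorb g+1 elements into g, recurse
        have hrlen : g + 3 ≤ ks.length := by omega
        set A := rest.take (g + 1) with hA_def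
        set Bl := rest.drop (g + 1) with hB_def
        have hAB : A ++ Bl = rest := List.take_append_drop _ _
        have hAlen : A.length = g + 1 := by
          simp only [hA_def, List.length_take]
          omega
        have hBlen : Bl.length = rest.length - (g + 1) := by
          simp [hB_def]
        have hge_A : ∀ i ∈ A, 1 ≤ i := fun i hi => hge_rest i (List.take_subset _ _ hi)
        have hge_B : ∀ i ∈ Bl, 1 ≤ i := fun i hi => hge_rest i (List.drop_subset _ _ hi)
        have hpg : g + 1 ≤ A.sum := hAlen ▸ length_le_sum A hge_A
        have hsum_rest : A.sum + Bl.sum = rest.sum := by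
          rw [← hAB, List.sum_append]
        -- FdB on A.map (·+1)
        set L1 := A.map (· + 1) with hL1_def
        have hL1len : L1.length = g + 1 := by simp [hL1_def, hAlen]
        have hL1ne : L1 ≠ [] := by
          intro h; rw [h] at hL1len; simp at hL1len
        have hL1ge : ∀ i ∈ L1, 1 ≤ i := by
          intro i hi
          simp only [hL1_def, List.mem_map] at hi
          obtain ⟨n, _, rfl⟩ := hi; omega
        have hL1sum : L1.sum = (g + A.sum) + 1 := by
          simp only [hL1_def, sum_map_succ, hAlen]; omega
        have h1 := H L1 hL1ne hL1ge
        rw [hL1len, hL1sum] at h1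
        have hmapL1 : (L1.map m).prod = (A.map fun n => m (n + 1)).prod := by
          simp [hL1_def, List.map_map, Function.comp_def]
        rw [hmapL1] at h1
        -- IH on (g + A.sum) :: Bl
        have hks'len : ((g + A.sum) :: Bl).length ≤ N := by
          simp only [List.length_cons, hBlen]
          omega
        have hks'ge : ∀ i ∈ (g + A.sum) :: Bl, 1 ≤ i := by
          intro i hi
          rcases List.mem_cons.mp hi with rfl | hi
          · omega
          · exact hge_B i hi
        have h2 := ih ((g + A.sum) :: Bl) hks'len hks'ge (g + A.sum) (by simp)
        have hsum' : ((g + A.sum) :: Bl).sum = ks.sum := by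
          simp only [List.sum_cons]; omega
        rw [hsum'] at h2
        simp only [List.map_cons, List.prod_cons] at h2
        -- combine
        have hPB : 0 < (Bl.map fun n => m (n + 1)).prod := prodpos m hm Bl
        have hPA : 0 < (A.map fun n => m (n + 1)).prod := prodpos m hm A
        have hprest : (rest.map fun n => m (n + 1)).prod
            = (A.map fun n => m (n + 1)).prod * (Bl.map fun n => m (n + 1)).prod := by
          rw [← hAB, List.map_append, List.prod_append]
        have hsk : g + A.sum ≤ ks.sum := by
          have hB1 : 1 ≤ Bl.length := by
            rw [hBlen]; omega
          have := length_le_sum Bl hge_B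
          omega
        have hexp2 : lam ^ ((g + A.sum) + 1) * (lam ^ 2 * c) ^ (2 * ks.sum - (g + A.sum))
            ≤ (lam ^ 2 * c) ^ (2 * ks.sum - g) := by
          have hsplit : (lam ^ 2 * c) ^ (2 * ks.sum - g)
              = (lam ^ 2 * c) ^ A.sum * (lam ^ 2 * c) ^ (2 * ks.sum - (g + A.sum)) := by
            rw [← pow_add]
            congr 1
            omega
          rw [hsplit]
          apply mul_le_mul_of_nonneg_right _ (by positivity)
          calc lam ^ ((g + A.sum) + 1) ≤ lam ^ (2 * A.sum) := pow_le_pow_right₀ hlam (by omega)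
            _ = (lam ^ 2) ^ A.sum := by rw [← pow_mul]
            _ ≤ (lam ^ 2) ^ A.sum * c ^ A.sum := by
                apply le_mul_of_one_le_right (by positivity)
                calc (1:ℝ) = 1 ^ A.sum := by simp
                  _ ≤ c ^ A.sum := pow_le_pow_left₀ (by norm_num) hc1 _
            _ = (lam ^ 2 * c) ^ A.sum := by rw [mul_pow]
        calc (ks.map fun n => m (n + 1)).prod
            = (m (g + 1) * (A.map fun n => m (n + 1)).prod) * (Bl.map fun n => m (n + 1)).prod := by
              rw [hprodeq, hprest]; ring
          _ ≤ (lam ^ ((g + A.sum) + 1) * m ((g + A.sum) + 1)) * (Bl.map fun n => m (n + 1)).prod := by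
              exact mul_le_mul_of_nonneg_right h1 (le_of_lt hPB)
          _ = lam ^ ((g + A.sum) + 1) * (m ((g + A.sum) + 1) * (Bl.map fun n => m (n + 1)).prod) := by
              ring
          _ ≤ lam ^ ((g + A.sum) + 1) * ((lam ^ 2 * c) ^ (2 * ks.sum - (g + A.sum)) * m (ks.sum + 1)) := by
              apply mul_le_mul_of_nonneg_left h2 (by positivity)
          _ = (lam ^ ((g + A.sum) + 1) * (lam ^ 2 * c) ^ (2 * ks.sum - (g + A.sum))) * m (ks.sum + 1) := by
              ring
          _ ≤ (lam ^ 2 * c) ^ (2 * ks.sum - g) * m (ks.sum + 1) := by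
              exact mul_le_mul_of_nonneg_right hexp2 (le_of_lt hmk1)

private lemma sum_map_pred (l : List ℕ) (h : ∀ i ∈ l, 1 ≤ i) :
    (l.map (· - 1)).sum = l.sum - l.length := by
  induction l with
  | nil => simp
  | cons a t ih =>
    have h1 := h a (by simp)
    have h2 := ih (fun i hi => h i (by simp [hi]))
    have h3 := length_le_sum t (fun i hi => h i (by simp [hi]))
    simp only [List.map_cons, List.sum_cons, List.length_cons]
    omega

private lemma split_one (m : ℕ → ℝ) : ∀ ks : List ℕ, (∀ i ∈ ks, 1 ≤ i) →
    (ks.map m).prod = (m 1) ^ (ks.count 1) * (((ks.filter fun i => 2 ≤ i).map m).prod)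
    ∧ ks.sum = ks.count 1 + (ks.filter fun i => 2 ≤ i).sum
    ∧ ks.length = ks.count 1 + (ks.filter fun i => 2 ≤ i).length := by
  intro ks
  induction ks with
  | nil => simp
  | cons a t ih =>
    intro h
    obtain ⟨h1, h2, h3⟩ := ih (fun i hi => h i (by simp [hi]))
    have ha := h a (by simp)
    by_cases ha2 : 2 ≤ a
    · have hane : (1:ℕ) ≠ a := by omega
      rw [List.filter_cons_of_pos (by simpa using ha2), List.count_cons_of_ne hane.symm]
      simp only [List.map_cons, List.prod_cons, List.sum_cons, List.length_cons]
      refine ⟨by rw [h1]; ring, by omega, by omega⟩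
    · have hae : a = 1 := by omega
      subst hae
      rw [List.filter_cons_of_neg (by simpa using ha2), List.count_cons_self]
      simp only [List.map_cons, List.prod_cons, List.sum_cons, List.length_cons]
      refine ⟨by rw [h1, pow_succ]; ring, by omega, by omega⟩

private lemma asm_main (m : ℕ → ℝ) (hm : ∀ n, 1 ≤ n → 0 < m n)
    (lam : ℝ) (hlam : 1 ≤ lam)
    (H : ∀ ks : List ℕ, ks ≠ [] → (∀ i ∈ ks, 1 ≤ i) →
      (ks.map fun n => m (n + 1)).prod ≤ lam ^ ks.sum * m (ks.sum + 1))
    (ks : List ℕ) (hge : ∀ i ∈ ks, 1 ≤ i) (hlen2 : 2 ≤ ks.length) :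
    m ks.length * (ks.map m).prod ≤ (lam * max 1 (m 1)) ^ ks.sum * m ks.sum := by
  set d : ℝ := max 1 (m 1) with hd_def
  have hd1 : (1:ℝ) ≤ d := le_max_left _ _
  have hm1 : 0 < m 1 := hm 1 le_rfl
  have hlensum : ks.length ≤ ks.sum := length_le_sum ks hge
  have hk1 : 1 ≤ ks.sum := by omega
  have hmk : 0 < m ks.sum := hm _ hk1
  obtain ⟨h1, h2, h3⟩ := split_one m ks hge
  set S := ks.filter fun i => 2 ≤ i with hS_def
  set z := ks.count 1 with hz_def
  have hS2 : ∀ i ∈ S, 2 ≤ i := by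
    intro i hi
    have := (List.mem_filter.mp hi).2
    exact of_decide_eq_true this
  have hS1 : ∀ i ∈ S, 1 ≤ i := fun i hi => le_trans (by norm_num) (hS2 i hi)
  have hSls : S.length ≤ S.sum := length_le_sum S hS1
  set L := (ks.length - 1) :: (S.map (fun i => i - 1)) with hL_def
  have hLne : L ≠ [] := by simp [hL_def]
  have hLge : ∀ i ∈ L, 1 ≤ i := by
    intro i hi
    rcases List.mem_cons.mp hi with rfl | hi
    · omega
    · simp only [List.mem_map] at hi
      obtain ⟨n, hn, rfl⟩ := hi
      have := hS2 n hn
      omega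
  have hLsum : L.sum = ks.sum - 1 := by
    simp only [hL_def, List.sum_cons, sum_map_pred S hS1]
    omega
  have hH := H L hLne hLge
  rw [hLsum] at hH
  have hks1 : ks.sum - 1 + 1 = ks.sum := by omega
  rw [hks1] at hH
  have hLmap : (L.map fun n => m (n + 1)).prod = m ks.length * (S.map m).prod := by
    simp only [hL_def, List.map_cons, List.prod_cons, List.map_map]
    congr 1
    · congr 1
      omega
    · apply congrArg
      apply List.map_congr_left
      intro i hi
      have := hS2 i hi
      simp only [Function.comp_apply]
      congr 1
      omega
  rw [hLmap] at hH
  have hzk : z ≤ ks.sum := by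
    have : z ≤ ks.length := List.count_le_length
    omega
  have hSmpos : 0 < (S.map m).prod := by
    apply List.prod_pos
    intro x hx
    simp only [List.mem_map] at hx
    obtain ⟨n, hn, rfl⟩ := hx
    exact hm n (hS1 n hn)
  calc m ks.length * (ks.map m).prod
      = (m 1) ^ z * (m ks.length * (S.map m).prod) := by rw [h1]; ring
    _ ≤ (m 1) ^ z * (lam ^ (ks.sum - 1) * m ks.sum) := by
        exact mul_le_mul_of_nonneg_left hH (by positivity)
    _ = ((m 1) ^ z * lam ^ (ks.sum - 1)) * m ks.sum := by ring
    _ ≤ (d ^ ks.sum * lam ^ ks.sum) * m ks.sum := by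
        apply mul_le_mul_of_nonneg_right _ (le_of_lt hmk)
        apply mul_le_mul
        · calc (m 1) ^ z ≤ d ^ z := pow_le_pow_left₀ (le_of_lt hm1) (le_max_right _ _) z
            _ ≤ d ^ ks.sum := pow_le_pow_right₀ hd1 hzk
        · exact pow_le_pow_right₀ hlam (by omega)
        · positivity
        · positivity
    _ = (lam * d) ^ ks.sum * m ks.sum := by rw [mul_pow]; ring

/-- A weight `m` is FdB iff its left shift `m′ n = m (n + 1)` is almost
submultiplicative. -/
theorem stmt_10 (m : ℕ → ℝ) (hm : ∀ n, 1 ≤ n → 0 < m n) :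
    (∃ lam : ℝ, 1 ≤ lam ∧ ∀ ks : List ℕ, ks ≠ [] → (∀ i ∈ ks, 1 ≤ i) →
      m ks.length * (ks.map m).prod ≤ lam ^ ks.sum * m ks.sum)
    ↔
    (∃ lam : ℝ, 1 ≤ lam ∧ ∀ ks : List ℕ, ks ≠ [] → (∀ i ∈ ks, 1 ≤ i) →
      (ks.map fun n => m (n + 1)).prod ≤ lam ^ ks.sum * m (ks.sum + 1)) := by
  constructor
  · rintro ⟨lam, hlam, H⟩
    set c : ℝ := max 1 (m 1)⁻¹ with hc_def
    have hc1 : (1:ℝ) ≤ c := le_max_left _ _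
    have hm1 : 0 < m 1 := hm 1 le_rfl
    have hcm : 1 ≤ m 1 * c := by
      calc (1:ℝ) = m 1 * (m 1)⁻¹ := (mul_inv_cancel₀ (ne_of_gt hm1)).symm
        _ ≤ m 1 * c := by
            exact mul_le_mul_of_nonneg_left (le_max_right _ _) (le_of_lt hm1)
    have hnu : (1:ℝ) ≤ lam ^ 2 * c := by nlinarith
    refine ⟨(lam ^ 2 * c) ^ 2, by nlinarith, ?_⟩
    intro ks hne hge
    obtain ⟨g, hgks⟩ := List.exists_mem_of_ne_nil ks hne
    have hcore := fdb_core m hm lam c hlam hc1 hcm H ks.length ks le_rfl hge g hgks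
    calc (ks.map fun n => m (n + 1)).prod
        ≤ (lam ^ 2 * c) ^ (2 * ks.sum - g) * m (ks.sum + 1) := hcore
      _ ≤ (lam ^ 2 * c) ^ (2 * ks.sum) * m (ks.sum + 1) := by
          apply mul_le_mul_of_nonneg_right _ (le_of_lt (hm _ (by omega)))
          exact pow_le_pow_right₀ hnu (by omega)
      _ = ((lam ^ 2 * c) ^ 2) ^ ks.sum * m (ks.sum + 1) := by
          rw [← pow_mul, Nat.mul_comm]
  · rintro ⟨lam, hlam, H⟩
    set d : ℝ := max 1 (m 1) with hd_def
    have hd1 : (1:ℝ) ≤ d := le_max_left _ _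
    have hm1 : 0 < m 1 := hm 1 le_rfl
    refine ⟨lam * d, by nlinarith, ?_⟩
    intro ks hne hge
    have hlen1 : 1 ≤ ks.length := List.length_pos_iff.mpr hne
    have hlensum : ks.length ≤ ks.sum := length_le_sum ks hge
    have hk1 : 1 ≤ ks.sum := le_trans hlen1 hlensum
    have hmk : 0 < m ks.sum := hm _ hk1
    have hmu1 : (1:ℝ) ≤ lam * d := by nlinarith
    rcases ks with _ | ⟨a, t⟩
    · exact absurd rfl hne
    rcases t with _ | ⟨b, t⟩
    · -- singleton
      simp only [List.map_cons, List.map_nil, List.prod_cons, List.prod_nil, mul_one,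
        List.length_cons, List.length_nil, List.sum_cons, List.sum_nil, Nat.add_zero] at *
      have ha1 : 1 ≤ a := hge a (by simp)
      calc m 1 * m a ≤ d * m a := by
            exact mul_le_mul_of_nonneg_right (le_max_right _ _) (le_of_lt (hm a ha1))
        _ ≤ (lam * d) ^ a * m a := by
            apply mul_le_mul_of_nonneg_right _ (le_of_lt (hm a ha1))
            calc d = 1 * d := (one_mul d).symm
              _ ≤ lam * d := mul_le_mul_of_nonneg_right hlam (by linarith)
              _ = (lam * d) ^ 1 := (pow_one _).symm
              _ ≤ (lam * d) ^ a := pow_le_pow_right₀ hmu1 ha1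
    · -- length ≥ 2
      exact asm_main m hm lam hlam H (a :: b :: t) hge (by simp)
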